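/- For all real λ, x and nonnegative integers n, p, the truncated degenerate modified Bell polynomials satisfy the recurrence B^{(p)}_{n+1,λ}(x) = (x - nλ) B^{(p)}_{n,λ}(x) - Σ_{j=0}^{n} C(n,j)(1)_{n-j,λ} ( p/(p+1) · B^{(p+1)}_{j,λ}(x) - B^{(p)}_{j,λ}(x) ). -/

import Mathlib

open Finset

def degFall (l x : ℝ) (n : ℕ) : ℝ := ∏ i ∈ Finset.range n, (x - i * l)

def fall (x : ℝ) (n : ℕ) : ℝ := ∏ i ∈ Finset.range n, (x - i)

lemma degFall_succ (l x : ℝ) (n : ℕ) : degFall l x (n+1) = degFall l x n * (x - n*l) :=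
  Finset.prod_range_succ _ _

lemma fall_succ (x : ℝ) (n : ℕ) : fall x (n+1) = fall x n * (x - n) :=
  Finset.prod_range_succ _ _

lemma fall_add_one (y : ℝ) (m : ℕ) : fall (y+1) (m+1) = fall y m * (y+1) := by
  rw [fall, Finset.prod_range_succ']
  simp only [Nat.cast_zero, sub_zero, fall]
  congr 1
  apply Finset.prod_congr rfl
  intro i _
  push_cast; ring

lemma fall_shift (y : ℝ) (k : ℕ) :
    fall (y+1) k = fall y k + k * fall y (k-1) := by
  cases k with
  | zero => simp [fall]
  | succ m =>
    rw [fall_add_one, fall_succ]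
    simp only [Nat.add_sub_cancel]
    push_cast
    ring

lemma fall_nat_eq_zero {j k : ℕ} (h : j < k) : fall (j:ℝ) k = 0 := by
  apply Finset.prod_eq_zero (Finset.mem_range.2 h); simp

lemma fall_nat_self_ne_zero (j : ℕ) : fall (j:ℝ) j ≠ 0 := by
  apply ne_of_gt
  apply Finset.prod_pos; intro i hi; rw [Finset.mem_range] at hi
  have : (i:ℝ) < j := by exact_mod_cast hi
  linarith

lemma coeff_unique (N : ℕ) (c : ℕ → ℝ)
    (h : ∀ y : ℝ, ∑ k ∈ range N, c k * fall y k = 0) :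
    ∀ k < N, c k = 0 := by
  intro k
  induction k using Nat.strong_induction_on with
  | _ k ih =>
    intro hk
    have h1 := h k
    rw [Finset.sum_eq_single k] at h1
    · exact (mul_eq_zero.1 h1).resolve_right (fall_nat_self_ne_zero k)
    · intro i hi hne
      rcases lt_or_gt_of_ne hne with hlt | hgt
      · rw [ih i hlt (lt_trans hlt hk), zero_mul]
      · rw [fall_nat_eq_zero hgt, mul_zero]
    · intro hmem; exact absurd (Finset.mem_range.2 hk) hmem

lemma coeff_ext (N : ℕ) (c d : ℕ → ℝ)
    (h : ∀ y : ℝ, ∑ k ∈ range N, c k * fall y k = ∑ k ∈ range N, d k * fall y k) :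
    ∀ k < N, c k = d k := by
  intro k hk
  have := coeff_unique N (fun k => c k - d k) (fun y => by
    simp only [sub_mul, Finset.sum_sub_distrib, h y, sub_self]) k hk
  simpa using sub_eq_zero.mp this

lemma degFall_add (l a b : ℝ) (n : ℕ) :
    degFall l (a+b) n =
      ∑ j ∈ range (n+1), (n.choose j : ℝ) * degFall l a j * degFall l b (n-j) := by
  induction n with
  | zero => simp [degFall]
  | succ n ih =>
    rw [degFall_succ, ih, Finset.sum_mul]
    have key : ∀ j ∈ range (n+1),
        (n.choose j : ℝ) * degFall l a j * degFall l b (n-j) * (a + b - n*l)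
        = (n.choose j : ℝ) * degFall l a (j+1) * degFall l b (n-j)
          + (n.choose j : ℝ) * degFall l a j * degFall l b (n+1-j) := by
      intro j hj
      rw [Finset.mem_range] at hj
      have hj' : j ≤ n := Nat.lt_succ_iff.mp hj
      have h1 : (n+1) - j = (n-j) + 1 := by omega
      rw [h1, degFall_succ, degFall_succ]
      have h2 : ((n-j : ℕ) : ℝ) = (n:ℝ) - j := by
        rw [Nat.cast_sub hj']
      rw [h2]
      ring
    rw [Finset.sum_congr rfl key, Finset.sum_add_distrib]
    have e1 : ∑ j ∈ range (n+1), (n.choose j : ℝ) * degFall l a (j+1) * degFall l b (n-j)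
        = ∑ j ∈ range (n+2), (if 1 ≤ j then (n.choose (j-1) : ℝ) else 0) * degFall l a j * degFall l b (n+1-j) := by
      rw [Finset.sum_range_succ' (fun j => (if 1 ≤ j then (n.choose (j-1) : ℝ) else 0) * degFall l a j * degFall l b (n+1-j))]
      simp
    have e2 : ∑ j ∈ range (n+1), (n.choose j : ℝ) * degFall l a j * degFall l b (n+1-j)
        = ∑ j ∈ range (n+2), (n.choose j : ℝ) * degFall l a j * degFall l b (n+1-j) := by
      symm
      rw [Finset.sum_range_succ]
      simp
    rw [e1, e2, ← Finset.sum_add_distrib]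
    apply Finset.sum_congr rfl
    intro j hj
    cases j with
    | zero => simp
    | succ m =>
      simp only [Nat.add_sub_cancel, if_pos (Nat.one_le_iff_ne_zero.mpr (Nat.succ_ne_zero m))]
      rw [Nat.choose_succ_succ]
      push_cast
      ring

noncomputable def psi (p k : ℕ) : ℝ :=
  (p:ℝ)/((p:ℝ)+1) * (1/(((k+(p+1)).choose (p+1) : ℕ):ℝ)) - 1/(((k+p).choose p : ℕ):ℝ)

lemma key_id (p k : ℕ) :
    1/(((k+1+p).choose p : ℕ):ℝ) + (k:ℝ)/(((k+p).choose p : ℕ):ℝ)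
    + psi p k + (k:ℝ) * psi p (k-1) = 0 := by
  unfold psi
  have hp1 : ((p:ℝ)+1) ≠ 0 := by positivity
  cases k with
  | zero =>
    have h0 : (0+1+p).choose p = p+1 := by
      rw [show 0+1+p = p+1 by omega, Nat.choose_succ_self_right]
    simp only [h0, Nat.zero_add, Nat.cast_zero, zero_div, zero_mul, add_zero, Nat.choose_self,
      Nat.cast_one, Nat.cast_add]
    field_simp
    ring
  | succ m =>
    have fac : ∀ a : ℕ, ((a.factorial : ℕ):ℝ) ≠ 0 := fun a => by
      exact_mod_cast (Nat.factorial_pos a).ne'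
    have c1 : (((m+2+p).choose p : ℕ):ℝ) = ((m+2+p).factorial : ℝ) / ((p.factorial : ℝ) * ((m+2).factorial : ℝ)) := by
      rw [Nat.cast_choose ℝ (by omega : p ≤ m+2+p), Nat.add_sub_cancel]
    have c2 : (((m+1+p).choose p : ℕ):ℝ) = ((m+1+p).factorial : ℝ) / ((p.factorial : ℝ) * ((m+1).factorial : ℝ)) := by
      rw [Nat.cast_choose ℝ (by omega : p ≤ m+1+p), Nat.add_sub_cancel]
    have c3 : (((m+1+(p+1)).choose (p+1) : ℕ):ℝ) = ((m+2+p).factorial : ℝ) / (((p+1).factorial : ℝ) * ((m+1).factorial : ℝ)) := by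
      rw [Nat.cast_choose ℝ (by omega : p+1 ≤ m+1+(p+1))]
      rw [show m+1+(p+1) - (p+1) = m+1 by omega, show m+1+(p+1) = m+2+p by omega]
    have c4 : (((m+(p+1)).choose (p+1) : ℕ):ℝ) = ((m+1+p).factorial : ℝ) / (((p+1).factorial : ℝ) * ((m).factorial : ℝ)) := by
      rw [Nat.cast_choose ℝ (by omega : p+1 ≤ m+(p+1))]
      rw [show m+(p+1) - (p+1) = m by omega, show m+(p+1) = m+1+p by omega]
    have c5 : (((m+p).choose p : ℕ):ℝ) = ((m+p).factorial : ℝ) / ((p.factorial : ℝ) * ((m).factorial : ℝ)) := by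
      rw [Nat.cast_choose ℝ (by omega : p ≤ m+p), Nat.add_sub_cancel]
    have e1 : (m+1+1+p) = (m+2+p) := by omega
    have e2 : (m+1-1) = m := by omega
    simp only [e1, e2] at *
    rw [c1, c2, c3, c4, c5]
    have f1 : ((m+2+p).factorial : ℝ) = ((m+2+p):ℝ) * ((m+1+p):ℝ) * ((m+p).factorial : ℝ) := by
      rw [show m+2+p = (m+1+p)+1 by omega, Nat.factorial_succ, show m+1+p = (m+p)+1 by omega, Nat.factorial_succ]
      push_cast
      ring
    have f2 : ((m+1+p).factorial : ℝ) = ((m+1+p):ℝ) * ((m+p).factorial : ℝ) := by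
      rw [show m+1+p = (m+p)+1 by omega, Nat.factorial_succ]
      push_cast
      ring
    have f3 : ((m+2).factorial : ℝ) = ((m:ℝ)+2) * ((m:ℝ)+1) * ((m).factorial : ℝ) := by
      rw [show m+2 = (m+1)+1 from rfl, Nat.factorial_succ, Nat.factorial_succ]
      push_cast
      ring
    have f4 : ((m+1).factorial : ℝ) = ((m:ℝ)+1) * ((m).factorial : ℝ) := by
      rw [Nat.factorial_succ]
      push_cast
      ring
    have f5 : (((p+1)).factorial : ℝ) = ((p:ℝ)+1) * ((p).factorial : ℝ) := by
      rw [Nat.factorial_succ]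
      push_cast
      ring
    rw [f1, f2, f3, f4, f5]
    have hmp : ((m:ℝ)+p) ≥ 0 := by positivity
    have h1 : ((m:ℝ)+2+p) ≠ 0 := by nlinarith
    have h2 : ((m:ℝ)+1+p) ≠ 0 := by nlinarith
    push_cast
    field_simp
    ring

theorem truncated_degenerate_modified_Bell_recurrence
    (l x : ℝ) (n p : ℕ)
    (S2x : ℕ → ℕ → ℝ)
    (hSx : ∀ (y : ℝ) (m : ℕ),
      degFall l (y + x) m = ∑ k ∈ Finset.range (m + 1), S2x m k * fall y k)
    (B : ℕ → ℕ → ℝ)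
    (hB : ∀ q m : ℕ,
      B q m = ∑ k ∈ Finset.range (m + 1), S2x m k / (((k + q).choose q : ℕ) : ℝ)) :
    B p (n + 1) = (x - n * l) * B p n -
      ∑ j ∈ Finset.range (n + 1), ((n.choose j : ℕ) : ℝ) * degFall l 1 (n - j) *
        ((p : ℝ) / ((p : ℝ) + 1) * B (p + 1) j - B p j) := by
  -- Step 1: recurrence for S2x
  have Srec : ∀ k : ℕ, k < n + 1 + 1 → S2x (n+1) k =
      (if 1 ≤ k then S2x n (k-1) else 0)
      + (if k ≤ n then ((k:ℝ) + x - (n:ℝ)*l) * S2x n k else 0) := by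
    intro k hk
    have main : ∀ y : ℝ, ∑ j ∈ range (n+1+1), S2x (n+1) j * fall y j
        = ∑ j ∈ range (n+1+1), ((if 1 ≤ j then S2x n (j-1) else 0)
          + (if j ≤ n then ((j:ℝ) + x - (n:ℝ)*l) * S2x n j else 0)) * fall y j := by
      intro y
      rw [← hSx y (n+1), degFall_succ, hSx y n, Finset.sum_mul]
      have step : ∀ j ∈ range (n+1),
          S2x n j * fall y j * (y + x - (n:ℝ)*l)
          = S2x n j * fall y (j+1) + ((j:ℝ) + x - (n:ℝ)*l) * S2x n j * fall y j := by
        intro j _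
        rw [fall_succ]
        ring
      rw [Finset.sum_congr rfl step, Finset.sum_add_distrib]
      have e1 : ∑ j ∈ range (n+1), S2x n j * fall y (j+1)
          = ∑ j ∈ range (n+1+1), (if 1 ≤ j then S2x n (j-1) else 0) * fall y j := by
        rw [Finset.sum_range_succ' (fun j => (if 1 ≤ j then S2x n (j-1) else 0) * fall y j)]
        simp
      have e2 : ∑ j ∈ range (n+1), ((j:ℝ) + x - (n:ℝ)*l) * S2x n j * fall y j
          = ∑ j ∈ range (n+1+1), (if j ≤ n then ((j:ℝ) + x - (n:ℝ)*l) * S2x n j else 0) * fall y j := by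
        symm
        rw [Finset.sum_range_succ, if_neg (by omega), zero_mul, add_zero]
        apply Finset.sum_congr rfl
        intro j hj
        rw [Finset.mem_range, Nat.lt_succ_iff] at hj
        rw [if_pos hj]
      rw [e1, e2, ← Finset.sum_add_distrib]
      exact Finset.sum_congr rfl (fun j _ => by ring)
    exact coeff_ext (n+1+1) _ _ main k hk
  -- Step 2: the T = U identity
  have TU : ∀ k : ℕ, k < n + 1 →
      (∑ j ∈ range (n+1), ((n.choose j : ℕ):ℝ) * degFall l 1 (n-j) * (if k ≤ j then S2x j k else 0))
      = S2x n k + (if k + 1 ≤ n then ((k:ℝ)+1) * S2x n (k+1) else 0) := by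
    intro k hk
    have main2 : ∀ y : ℝ, ∑ k ∈ range (n+1),
        (∑ j ∈ range (n+1), ((n.choose j : ℕ):ℝ) * degFall l 1 (n-j) * (if k ≤ j then S2x j k else 0)) * fall y k
        = ∑ k ∈ range (n+1), (S2x n k + (if k + 1 ≤ n then ((k:ℝ)+1) * S2x n (k+1) else 0)) * fall y k := by
      intro y
      have lhs_eq : ∑ k ∈ range (n+1),
          (∑ j ∈ range (n+1), ((n.choose j : ℕ):ℝ) * degFall l 1 (n-j) * (if k ≤ j then S2x j k else 0)) * fall y k
          = degFall l ((y + x) + 1) n := by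
        calc ∑ k ∈ range (n+1),
            (∑ j ∈ range (n+1), ((n.choose j : ℕ):ℝ) * degFall l 1 (n-j) * (if k ≤ j then S2x j k else 0)) * fall y k
            = ∑ k ∈ range (n+1), ∑ j ∈ range (n+1),
              ((n.choose j : ℕ):ℝ) * degFall l 1 (n-j) * (if k ≤ j then S2x j k else 0) * fall y k := by
              apply Finset.sum_congr rfl
              intro k _
              rw [Finset.sum_mul]
          _ = ∑ j ∈ range (n+1), ∑ k ∈ range (n+1),
              ((n.choose j : ℕ):ℝ) * degFall l 1 (n-j) * (if k ≤ j then S2x j k else 0) * fall y k :=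
              Finset.sum_comm
          _ = ∑ j ∈ range (n+1), ((n.choose j : ℕ):ℝ) * degFall l (y+x) j * degFall l 1 (n-j) := by
              apply Finset.sum_congr rfl
              intro j hj
              rw [Finset.mem_range, Nat.lt_succ_iff] at hj
              have sub1 : ∑ k ∈ range (n+1),
                  ((n.choose j : ℕ):ℝ) * degFall l 1 (n-j) * (if k ≤ j then S2x j k else 0) * fall y k
                  = ∑ k ∈ range (j+1),
                  ((n.choose j : ℕ):ℝ) * degFall l 1 (n-j) * (if k ≤ j then S2x j k else 0) * fall y k := by
                symm
                apply Finset.sum_subset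
                · intro t ht
                  rw [Finset.mem_range] at *
                  omega
                · intro t _ htn
                  rw [Finset.mem_range, Nat.lt_succ_iff, not_le] at htn
                  rw [if_neg (by omega), mul_zero, zero_mul]
              have sub2 : ∑ k ∈ range (j+1),
                  ((n.choose j : ℕ):ℝ) * degFall l 1 (n-j) * (if k ≤ j then S2x j k else 0) * fall y k
                  = ∑ k ∈ range (j+1),
                  ((n.choose j : ℕ):ℝ) * degFall l 1 (n-j) * (S2x j k * fall y k) := by
                apply Finset.sum_congr rfl
                intro k hk2
                rw [Finset.mem_range, Nat.lt_succ_iff] at hk2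
                rw [if_pos hk2]
                ring
              rw [sub1, sub2, ← Finset.mul_sum, ← hSx y j]
              ring
          _ = degFall l ((y + x) + 1) n := by
              rw [degFall_add l (y+x) 1 n]
      rw [lhs_eq, show (y+x)+1 = (y+1)+x by ring, hSx (y+1) n]
      have step : ∀ k ∈ range (n+1),
          S2x n k * fall (y+1) k = S2x n k * fall y k + S2x n k * (k:ℝ) * fall y (k-1) := by
        intro k _
        rw [fall_shift]
        ring
      rw [Finset.sum_congr rfl step, Finset.sum_add_distrib]
      have e3 : ∑ k ∈ range (n+1), S2x n k * (k:ℝ) * fall y (k-1)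
          = ∑ k ∈ range (n+1), (if k+1 ≤ n then ((k:ℝ)+1) * S2x n (k+1) else 0) * fall y k := by
        rw [Finset.sum_range_succ' (fun k => S2x n k * (k:ℝ) * fall y (k-1))]
        simp only [Nat.cast_zero, mul_zero, zero_mul, add_zero, Nat.add_sub_cancel]
        symm
        rw [Finset.sum_range_succ, if_neg (by omega), zero_mul, add_zero]
        apply Finset.sum_congr rfl
        intro k hk2
        rw [Finset.mem_range] at hk2
        rw [if_pos (by omega)]
        push_cast
        ring
      rw [e3, ← Finset.sum_add_distrib]
      exact Finset.sum_congr rfl (fun k _ => by ring)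
    exact coeff_ext (n+1) _ _ main2 k hk
  -- Step 3: assembly
  rw [hB p (n+1), hB p n]
  have hBrw : ∀ j ∈ range (n+1), ((n.choose j : ℕ):ℝ) * degFall l 1 (n-j) *
      ((p:ℝ)/((p:ℝ)+1) * B (p+1) j - B p j)
      = ∑ k ∈ range (n+1), ((n.choose j : ℕ):ℝ) * degFall l 1 (n-j) * (if k ≤ j then S2x j k else 0) * psi p k := by
    intro j hj
    rw [Finset.mem_range, Nat.lt_succ_iff] at hj
    have b1 : ∀ q : ℕ, B q j = ∑ k ∈ range (n+1), (if k ≤ j then S2x j k else 0) / (((k+q).choose q : ℕ):ℝ) := by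
      intro q
      rw [hB q j]
      calc ∑ k ∈ range (j+1), S2x j k / (((k+q).choose q : ℕ):ℝ)
          = ∑ k ∈ range (j+1), (if k ≤ j then S2x j k else 0) / (((k+q).choose q : ℕ):ℝ) := by
            apply Finset.sum_congr rfl
            intro k hk
            rw [Finset.mem_range, Nat.lt_succ_iff] at hk
            rw [if_pos hk]
        _ = ∑ k ∈ range (n+1), (if k ≤ j then S2x j k else 0) / (((k+q).choose q : ℕ):ℝ) := by
            apply Finset.sum_subset
            · intro t ht
              rw [Finset.mem_range] at *
              omega
            · intro t _ htn
              rw [Finset.mem_range, Nat.lt_succ_iff, not_le] at htn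
              rw [if_neg (by omega), zero_div]
    rw [b1 (p+1), b1 p]
    unfold psi
    rw [Finset.mul_sum, ← Finset.sum_sub_distrib, Finset.mul_sum]
    apply Finset.sum_congr rfl
    intro k _
    ring
  rw [Finset.sum_congr rfl hBrw, Finset.sum_comm]
  have hT : ∀ k ∈ range (n+1),
      (∑ j ∈ range (n+1), ((n.choose j : ℕ):ℝ) * degFall l 1 (n-j) * (if k ≤ j then S2x j k else 0) * psi p k)
      = (S2x n k + (if k + 1 ≤ n then ((k:ℝ)+1) * S2x n (k+1) else 0)) * psi p k := by
    intro k hk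
    rw [Finset.mem_range] at hk
    rw [← Finset.sum_mul, TU k hk]
  rw [Finset.sum_congr rfl hT]
  have hL : ∀ k ∈ range (n+1+1), S2x (n+1) k / (((k+p).choose p : ℕ):ℝ)
      = (if 1 ≤ k then S2x n (k-1) else 0) / (((k+p).choose p : ℕ):ℝ)
        + (if k ≤ n then ((k:ℝ)+x-(n:ℝ)*l) * S2x n k else 0) / (((k+p).choose p : ℕ):ℝ) := by
    intro k hk
    rw [Finset.mem_range] at hk
    rw [Srec k hk, add_div]
  rw [Finset.sum_congr rfl hL, Finset.sum_add_distrib]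
  have P1 : ∑ k ∈ range (n+1+1), (if 1 ≤ k then S2x n (k-1) else 0) / (((k+p).choose p : ℕ):ℝ)
      = ∑ k ∈ range (n+1), S2x n k / (((k+1+p).choose p : ℕ):ℝ) := by
    rw [Finset.sum_range_succ' (fun k => (if 1 ≤ k then S2x n (k-1) else 0) / (((k+p).choose p : ℕ):ℝ))]
    simp
  have P2 : ∑ k ∈ range (n+1+1), (if k ≤ n then ((k:ℝ)+x-(n:ℝ)*l) * S2x n k else 0) / (((k+p).choose p : ℕ):ℝ)
      = ∑ k ∈ range (n+1), ((k:ℝ)+x-(n:ℝ)*l) * S2x n k / (((k+p).choose p : ℕ):ℝ) := by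
    rw [Finset.sum_range_succ, if_neg (by omega), zero_div, add_zero]
    apply Finset.sum_congr rfl
    intro k hk
    rw [Finset.mem_range, Nat.lt_succ_iff] at hk
    rw [if_pos hk]
  rw [P1, P2]
  have P4 : ∀ k ∈ range (n+1),
      (S2x n k + (if k + 1 ≤ n then ((k:ℝ)+1) * S2x n (k+1) else 0)) * psi p k
      = S2x n k * psi p k + (if k + 1 ≤ n then ((k:ℝ)+1) * S2x n (k+1) else 0) * psi p k :=
    fun k _ => add_mul _ _ _
  rw [Finset.sum_congr rfl P4, Finset.sum_add_distrib]
  have P3 : ∑ k ∈ range (n+1), (if k+1 ≤ n then ((k:ℝ)+1) * S2x n (k+1) else 0) * psi p k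
      = ∑ k ∈ range (n+1), (k:ℝ) * S2x n k * psi p (k-1) := by
    rw [Finset.sum_range_succ, if_neg (by omega), zero_mul, add_zero]
    rw [Finset.sum_range_succ' (fun k => (k:ℝ) * S2x n k * psi p (k-1))]
    simp only [Nat.cast_zero, zero_mul, add_zero, Nat.add_sub_cancel]
    apply Finset.sum_congr rfl
    intro k hk
    rw [Finset.mem_range] at hk
    rw [if_pos (by omega)]
    push_cast
    ring
  rw [P3, Finset.mul_sum]
  rw [← Finset.sum_add_distrib, ← Finset.sum_add_distrib, ← Finset.sum_sub_distrib]
  rw [← sub_eq_zero, ← Finset.sum_sub_distrib]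
  apply Finset.sum_eq_zero
  intro k _
  linear_combination S2x n k * key_id p k
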